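/- arXiv:1612.06563 — 3 statements merged into one kernel-verified Lean document; each statement's English description precedes it below -/
import Mathlib

section
/- For every nonnegative integer m, the coefficient of t^m in the polynomial g_{m,1}(t) equals (−1)^m. -/
open Polynomial PowerSeries

noncomputable def fmi : ℕ → ℕ → Polynomial ℚ
  | 0, 0 => Polynomial.C (1/2) * Polynomial.X - 1
  | 0, 1 => 1
  | 0, _ + 2 => 0
  | m + 1, 0 => Polynomial.X * Polynomial.derivative (fmi m 0)
  | m + 1, i + 1 =>
    if i = m + 1 then -((m : ℚ) + 1) • fmi m (m + 1)
    else if i + 1 ≤ m + 1 then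
      Polynomial.X * Polynomial.derivative (fmi m (i + 1))
        + Polynomial.C ((i : ℚ) + 1) * (1 - Polynomial.X) * fmi m (i + 1)
        - Polynomial.C (i : ℚ) * fmi m i
    else 0

lemma fconst (m : ℕ) : fmi m (m + 1) = Polynomial.C ((-1 : ℚ) ^ m * m.factorial) := by
  induction m with
  | zero => simp [fmi]
  | succ m ih =>
    show fmi (m + 1) ((m + 1) + 1) = _
    rw [show fmi (m + 1) ((m + 1) + 1) = -((m : ℚ) + 1) • fmi m (m + 1) by
      rw [fmi]; simp]
    rw [ih, Nat.factorial_succ]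
    rw [Polynomial.smul_C]
    congr 1
    simp only [smul_eq_mul]
    push_cast
    ring

lemma fvan (m : ℕ) : ∀ i k : ℕ, m < k + i → (fmi m (i + 1)).coeff k = 0 := by
  induction m with
  | zero =>
    intro i k h
    match i with
    | 0 => simp [fmi, Polynomial.coeff_one]; omega
    | i + 1 => simp [fmi]
  | succ m ih =>
    intro i k h
    by_cases hi : i = m + 1
    · subst hi
      rw [show fmi (m + 1) ((m+1) + 1) = -((m : ℚ) + 1) • fmi m (m + 1) by rw [fmi]; simp]
      rw [Polynomial.coeff_smul]
      rw [ih (m) k (by omega)]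
      simp
    · by_cases hi2 : i + 1 ≤ m + 1
      · rw [show fmi (m + 1) (i + 1) =
          Polynomial.X * Polynomial.derivative (fmi m (i + 1))
            + Polynomial.C ((i : ℚ) + 1) * (1 - Polynomial.X) * fmi m (i + 1)
            - Polynomial.C (i : ℚ) * fmi m i by rw [fmi]; simp [hi, hi2]]
        rw [Polynomial.coeff_sub, Polynomial.coeff_add]
        have hk : 1 ≤ k := by omega
        obtain ⟨k', rfl⟩ : ∃ k', k = k' + 1 := ⟨k - 1, by omega⟩
        rw [Polynomial.coeff_X_mul, Polynomial.coeff_derivative]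
        rw [ih i (k' + 1) (by omega)]
        rw [mul_assoc, Polynomial.coeff_C_mul, Polynomial.coeff_C_mul]
        rw [sub_mul, one_mul, Polynomial.coeff_sub, Polynomial.coeff_X_mul]
        rw [ih i (k' + 1) (by omega), ih i k' (by omega)]
        match i with
        | 0 => simp
        | i + 1 =>
          rw [ih i (k' + 1) (by omega)]
          simp
      · rw [show fmi (m + 1) (i + 1) = 0 by rw [fmi]; simp [hi, hi2]]
        simp

lemma fdeg (m i : ℕ) : (fmi m (i + 1)).natDegree ≤ m - i := by
  rw [Polynomial.natDegree_le_iff_coeff_eq_zero]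
  intro k hk
  exact fvan m i k (by omega)

lemma crec (m i d : ℕ) (h : i + d = m) :
    (fmi (m + 1) (i + 1)).coeff (d + 1) =
      -((i : ℚ) + 1) * (fmi m (i + 1)).coeff d - (i : ℚ) * (fmi m i).coeff (d + 1) := by
  have hi : i ≠ m + 1 := by omega
  have hi2 : i + 1 ≤ m + 1 := by omega
  rw [show fmi (m + 1) (i + 1) =
      Polynomial.X * Polynomial.derivative (fmi m (i + 1))
        + Polynomial.C ((i : ℚ) + 1) * (1 - Polynomial.X) * fmi m (i + 1)
        - Polynomial.C (i : ℚ) * fmi m i by rw [fmi]; simp [hi, hi2]]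
  rw [Polynomial.coeff_sub, Polynomial.coeff_add]
  rw [Polynomial.coeff_X_mul, Polynomial.coeff_derivative]
  rw [fvan m i (d + 1) (by omega)]
  rw [mul_assoc, Polynomial.coeff_C_mul, Polynomial.coeff_C_mul]
  rw [sub_mul, one_mul, Polynomial.coeff_sub, Polynomial.coeff_X_mul]
  rw [fvan m i (d + 1) (by omega)]
  ring

lemma Ssum (m : ℕ) :
    ∑ i ∈ Finset.range (m + 1), (-1 : ℚ) ^ i * (fmi (m + 1) (i + 1)).coeff (m + 1 - i)
      = -((m + 1).factorial : ℚ) := by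
  set E : ℕ → ℚ := fun i => (-1 : ℚ) ^ i * ((i : ℚ) + 1) * (fmi m (i + 1)).coeff (m - i)
    with hE
  rw [Finset.sum_range_succ']
  have h0 : (-1 : ℚ) ^ 0 * (fmi (m + 1) (0 + 1)).coeff (m + 1 - 0) = -E 0 := by
    have := crec m 0 m (by omega)
    simp only [hE]
    rw [show m + 1 - 0 = m + 1 from rfl, this]
    push_cast
    simp [Nat.sub_zero]
  have hstep : ∀ i ∈ Finset.range m,
      (-1 : ℚ) ^ (i + 1) * (fmi (m + 1) (i + 1 + 1)).coeff (m + 1 - (i + 1)) = E i - E (i + 1) := by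
    intro i hi
    have hi' : i < m := Finset.mem_range.mp hi
    have hd : (i + 1) + (m - i - 1) = m := by omega
    have := crec m (i + 1) (m - i - 1) hd
    rw [show m + 1 - (i + 1) = (m - i - 1) + 1 by omega, this]
    simp only [hE]
    rw [show m - (i + 1) = m - i - 1 by omega, show (m - i - 1) + 1 = m - i by omega]
    push_cast
    ring
  rw [Finset.sum_congr rfl hstep, Finset.sum_range_sub', h0]
  have hEm : E m = ((m + 1).factorial : ℚ) := by
    simp only [hE]
    rw [Nat.sub_self, fconst m, Polynomial.coeff_C_zero, Nat.factorial_succ]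
    have hsq : ((-1 : ℚ) ^ m) * ((-1 : ℚ) ^ m) = 1 := by
      rw [← pow_add, ← two_mul, pow_mul]; norm_num
    push_cast
    linear_combination ((m : ℚ) + 1) * (m.factorial : ℚ) * hsq
  have hE0 : E 0 - E m + -E 0 = -E m := by ring
  rw [hE0, hEm]

noncomputable def gmi : ℕ → ℕ → Polynomial ℚ
  | m, i =>
    if i = m + 1 then Polynomial.C ((-1 : ℚ) ^ m / m.factorial)
    else if h : 1 ≤ i ∧ i ≤ m then
      Polynomial.C ((-1 : ℚ) ^ (m + 1) / m.factorial) *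
        ∑ j ∈ (Finset.Icc i m).attach, fmi m j.1 * gmi (j.1 - 1) i
    else 0
  termination_by m i => m
  decreasing_by
    have hj := Finset.mem_Icc.mp j.2
    omega

lemma gmi_succ (m : ℕ) (hm : 1 ≤ m) :
    gmi m 1 = Polynomial.C ((-1 : ℚ) ^ (m + 1) / m.factorial) *
      ∑ j ∈ Finset.Icc 1 m, fmi m j * gmi (j - 1) 1 := by
  rw [gmi]
  have h1 : (1 : ℕ) ≠ m + 1 := by omega
  rw [if_neg h1, dif_pos ⟨le_refl 1, hm⟩]
  congr 1
  exact Finset.sum_attach _ fun j => fmi m j * gmi (j - 1) 1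

lemma gkey : ∀ m : ℕ, (gmi m 1).coeff m = (-1 : ℚ) ^ m ∧ (gmi m 1).natDegree ≤ m := by
  intro m
  induction m using Nat.strong_induction_on with
  | _ m ih =>
    match m with
    | 0 =>
      rw [show gmi 0 1 = Polynomial.C ((-1 : ℚ) ^ 0 / Nat.factorial 0) by rw [gmi]; simp]
      norm_num
    | m + 1 =>
      rw [gmi_succ (m + 1) (by omega)]
      have hprod : ∀ j ∈ Finset.Icc 1 (m + 1),
          (fmi (m + 1) j * gmi (j - 1) 1).natDegree ≤ m + 1 := by
        intro j hj
        obtain ⟨hj1, hj2⟩ := Finset.mem_Icc.mp hj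
        obtain ⟨i, rfl⟩ : ∃ i, j = i + 1 := ⟨j - 1, by omega⟩
        calc (fmi (m + 1) (i + 1) * gmi (i + 1 - 1) 1).natDegree
            ≤ (fmi (m + 1) (i + 1)).natDegree + (gmi (i + 1 - 1) 1).natDegree :=
              Polynomial.natDegree_mul_le
          _ ≤ (m + 1 - i) + i := by
              have h1 := fdeg (m + 1) i
              have h2 := (ih i (by omega)).2
              simp only [Nat.add_sub_cancel]
              omega
          _ ≤ m + 1 := by omega
      constructor
      · rw [Polynomial.coeff_C_mul]
        rw [Polynomial.finset_sum_coeff]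
        have hterm : ∀ j ∈ Finset.Icc 1 (m + 1),
            (fmi (m + 1) j * gmi (j - 1) 1).coeff (m + 1) =
              (fmi (m + 1) j).coeff (m + 1 - (j - 1)) * (-1 : ℚ) ^ (j - 1) := by
          intro j hj
          obtain ⟨hj1, hj2⟩ := Finset.mem_Icc.mp hj
          obtain ⟨i, rfl⟩ : ∃ i, j = i + 1 := ⟨j - 1, by omega⟩
          simp only [Nat.add_sub_cancel]
          have hsum : (m + 1 - i) + i = m + 1 := by omega
          have hcm := Polynomial.coeff_mul_add_eq_of_natDegree_le
            (f := fmi (m + 1) (i + 1)) (g := gmi i 1) (df := m + 1 - i) (dg := i)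
            (by have := fdeg (m + 1) i; omega) (ih i (by omega)).2
          rw [hsum] at hcm
          rw [hcm, (ih i (by omega)).1]
        rw [Finset.sum_congr rfl hterm]
        rw [show Finset.Icc 1 (m + 1) = Finset.Ico 1 (m + 2) by rw [← Finset.Ico_add_one_right_eq_Icc]; rfl]
        rw [Finset.sum_Ico_eq_sum_range]
        simp only [Nat.add_sub_cancel, show m + 2 - 1 = m + 1 from rfl]
        have : ∀ i ∈ Finset.range (m + 1),
            (fmi (m + 1) (1 + i)).coeff (m + 1 - (1 + i - 1)) * (-1 : ℚ) ^ (1 + i - 1) =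
              (-1 : ℚ) ^ i * (fmi (m + 1) (i + 1)).coeff (m + 1 - i) := by
          intro i hi
          rw [show 1 + i - 1 = i by omega, show 1 + i = i + 1 by omega]
          ring
        rw [Finset.sum_congr rfl this, Ssum m]
        have hf : ((m + 1).factorial : ℚ) ≠ 0 := by
          exact_mod_cast Nat.factorial_ne_zero (m + 1)
        field_simp
        ring
      · calc (Polynomial.C ((-1 : ℚ) ^ (m + 1 + 1) / (m + 1).factorial) *
            ∑ j ∈ Finset.Icc 1 (m + 1), fmi (m + 1) j * gmi (j - 1) 1).natDegree
            ≤ _ + _ := Polynomial.natDegree_mul_le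
          _ ≤ 0 + (m + 1) := by
              gcongr
              · exact le_of_eq (Polynomial.natDegree_C _)
              · exact Polynomial.natDegree_sum_le_of_forall_le _ _ hprod
          _ = m + 1 := by omega

theorem gmi_one_coeff (m : ℕ) : (gmi m 1).coeff m = (-1 : ℚ) ^ m := by
  exact (gkey m).1
end

section
/- For every positive integer i, one has the identity of formal power series h(t)^i = ∑_{j=1}^{i} g_{i−1,j}(t)·D^{j−1}g(t) + (1/2)·(−1)^i·t^i in ℚ⟦t⟧. -/
open Polynomial PowerSeries

/-- The Bernoulli generating series `h(t) = t/(e^t - 1)`. -/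
noncomputable def hps : PowerSeries ℚ := bernoulliPowerSeries ℚ

/-- `f(t) = h(t) - 1 + t/2`. -/
noncomputable def fps : PowerSeries ℚ :=
  hps - 1 + PowerSeries.C (R := ℚ) (1/2) * PowerSeries.X

/-- `g(t) = h(t) + t/2`. -/
noncomputable def gps : PowerSeries ℚ :=
  hps + PowerSeries.C (R := ℚ) (1/2) * PowerSeries.X

/-- The derivation `D = t·(d/dt)` on `ℚ⟦t⟧`. -/
noncomputable def Dop (φ : PowerSeries ℚ) : PowerSeries ℚ :=
  PowerSeries.X * φ.derivativeFun

/-! ### Auxiliary lemmas -/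

lemma fmi_zero_succ (m : ℕ) : fmi (m+1) 0 = Polynomial.X * Polynomial.derivative (fmi m 0) := by
  rw [fmi]

lemma fmi_mid (m i : ℕ) (h : i ≤ m) :
    fmi (m+1) (i+1) = Polynomial.X * Polynomial.derivative (fmi m (i+1))
        + Polynomial.C ((i : ℚ) + 1) * (1 - Polynomial.X) * fmi m (i+1)
        - Polynomial.C (i : ℚ) * fmi m i := by
  rw [fmi, if_neg (by omega), if_pos (by omega)]

lemma fmi_last (m : ℕ) : fmi (m+1) (m+2) = -((m : ℚ) + 1) • fmi m (m+1) := by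
  rw [fmi, if_pos rfl]

lemma fmi_top (m : ℕ) : fmi m (m+1) = Polynomial.C ((-1:ℚ)^m * m.factorial) := by
  induction m with
  | zero => rw [fmi]; simp
  | succ m ih =>
    rw [fmi_last, ih, smul_C]
    congr 1
    rw [Nat.factorial_succ, smul_eq_mul]
    push_cast
    ring

lemma fmi_zero_val (m : ℕ) : fmi (m+1) 0 = Polynomial.C (1/2 : ℚ) * Polynomial.X := by
  induction m with
  | zero =>
    rw [fmi_zero_succ, show fmi 0 0 = Polynomial.C (1/2:ℚ) * Polynomial.X - 1 from by rw [fmi]]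
    simp
  | succ m ih =>
    rw [fmi_zero_succ, ih]
    simp

section generic
variable {A : Type*} [CommRing A] (d : A → A) (c : Polynomial ℚ →+* A) (x y : A)

lemma d_zero (hd_add : ∀ a b, d (a+b) = d a + d b) : d 0 = 0 := by
  have h := hd_add 0 0
  rw [add_zero] at h
  have := congrArg (fun z => z - d 0) h
  simpa using this.symm

lemma d_sum (hd_add : ∀ a b, d (a+b) = d a + d b) (s : Finset ℕ) (F : ℕ → A) :
    d (∑ i ∈ s, F i) = ∑ i ∈ s, d (F i) := by
  classical
  induction s using Finset.induction_on with
  | empty => simpa using d_zero d hd_add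
  | @insert _ _ h ih => rw [Finset.sum_insert h, Finset.sum_insert h, hd_add, ih]

lemma d_pow (hd_mul : ∀ a b, d (a*b) = d a * b + a * d b) (n : ℕ) :
    d (y ^ (n+1)) = ((n+1 : ℕ) : A) * (y ^ n * d y) := by
  induction n with
  | zero => simp
  | succ n ih =>
    rw [pow_succ, hd_mul, ih]
    push_cast
    ring

lemma gstep (hd_add : ∀ a b, d (a+b) = d a + d b)
    (hd_mul : ∀ a b, d (a*b) = d a * b + a * d b)
    (hd_c : ∀ p : Polynomial ℚ, d (c p) = x * c (Polynomial.derivative p))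
    (hx : c Polynomial.X = x)
    (hy : d y = y - x * y - y^2) (m : ℕ) :
    d (∑ i ∈ Finset.range (m+2), c (fmi m i) * y ^ i)
      = ∑ i ∈ Finset.range (m+3), c (fmi (m+1) i) * y ^ i := by
  rw [d_sum d hd_add]
  rw [Finset.sum_range_succ' (fun i => d (c (fmi m i) * y ^ i)) (m+1),
      Finset.sum_range_succ' (fun i => c (fmi (m+1) i) * y ^ i) (m+2),
      Finset.sum_range_succ (fun i => c (fmi (m+1) (i+1)) * y ^ (i+1)) (m+1)]
  have h0 : d (c (fmi m 0) * y ^ 0) = c (fmi (m+1) 0) * y ^ 0 := by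
    rw [pow_zero, mul_one, mul_one, hd_c, fmi_zero_succ, map_mul, hx]
  set K : ℕ → A := fun j => ((j : ℕ) : A) * (c (fmi m j) * y ^ (j+1)) with hK
  have e : ∀ i : ℕ, c (Polynomial.C ((i:ℚ))) = ((i : ℕ) : A) := by
    intro i
    rw [show Polynomial.C ((i:ℚ)) = ((i:ℕ) : Polynomial ℚ) by push_cast; simp, map_natCast]
  have key : ∀ i ∈ Finset.range (m+1),
      d (c (fmi m (i+1)) * y ^ (i+1))
        = c (fmi (m+1) (i+1)) * y ^ (i+1) + (K i - K (i+1)) := by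
    intro i hi
    have hi' : i ≤ m := by
      have := Finset.mem_range.mp hi; omega
    rw [hd_mul, hd_c, d_pow d y hd_mul, hy, fmi_mid m i hi']
    simp only [map_sub, map_add, map_mul, map_one, hx, e, hK]
    push_cast
    ring
  rw [Finset.sum_congr rfl key, Finset.sum_add_distrib, Finset.sum_range_sub' K (m+1)]
  have hK0 : K 0 = 0 := by simp [hK]
  have hlast : c (fmi (m+1) (m+2)) * y ^ (m+2) = - K (m+1) := by
    rw [fmi_last, Polynomial.smul_eq_C_mul, map_mul,
      show Polynomial.C (-((m:ℚ)+1)) = -((m+1:ℕ) : Polynomial ℚ) by push_cast; simp, map_neg,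
      map_natCast]
    simp only [hK]
    push_cast
    ring
  rw [h0, hlast, hK0]
  ring

end generic

/-! ### Dop basics -/

lemma Dop_add (a b : PowerSeries ℚ) : Dop (a + b) = Dop a + Dop b := by
  simp [Dop, derivativeFun_add, mul_add]

lemma Dop_mul (a b : PowerSeries ℚ) : Dop (a * b) = Dop a * b + a * Dop b := by
  simp [Dop, derivativeFun_mul]; ring

lemma Dop_one : Dop (1 : PowerSeries ℚ) = 0 := by
  simp [Dop, derivativeFun_one]

lemma Dop_coe (p : Polynomial ℚ) :
    Dop (p : PowerSeries ℚ) = ((Polynomial.X * derivative p : Polynomial ℚ) : PowerSeries ℚ) := by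
  simp [Dop, derivativeFun_coe, Polynomial.coe_mul, Polynomial.coe_X]
  exact derivative_coe p

lemma exp_deriv : (PowerSeries.exp ℚ).derivativeFun = PowerSeries.exp ℚ := by
  ext n
  change PowerSeries.coeff n (d⁄dX ℚ (PowerSeries.exp ℚ)) = _
  rw [coeff_derivativeFun]
  simp [coeff_exp, Nat.factorial_succ]
  field_simp

lemma exp_sub_one_ne : (PowerSeries.exp ℚ - 1) ≠ 0 := by
  intro h
  have : (PowerSeries.coeff (R := ℚ) 1) (PowerSeries.exp ℚ - 1) = 1 := by
    simp [coeff_exp]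
  rw [h] at this
  simp at this

lemma Dop_hps : Dop hps = hps - PowerSeries.X * hps - hps ^ 2 := by
  have key : hps * (PowerSeries.exp ℚ - 1) = PowerSeries.X :=
    bernoulliPowerSeries_mul_exp_sub_one ℚ
  apply mul_right_cancel₀ exp_sub_one_ne
  have hd : (hps * (PowerSeries.exp ℚ - 1)).derivativeFun = (PowerSeries.X : PowerSeries ℚ).derivativeFun := by
    rw [key]
  rw [derivativeFun_mul] at hd
  have hdX : (PowerSeries.X : PowerSeries ℚ).derivativeFun = 1 := PowerSeries.derivative_X (R := ℚ)
  have hde : (PowerSeries.exp ℚ - 1).derivativeFun = PowerSeries.exp ℚ := by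
    have h0 : (PowerSeries.exp ℚ - 1) = PowerSeries.exp ℚ + (-1) := by ring
    have h1 : (-1 : PowerSeries ℚ) = PowerSeries.C (R := ℚ) (-1) := by simp
    rw [h0, derivativeFun_add, exp_deriv, h1, show (PowerSeries.C (R := ℚ) (-1)).derivativeFun = 0 from derivative_C, add_zero]
  rw [hdX, hde, smul_eq_mul, smul_eq_mul] at hd
  have hXd : Dop hps * (PowerSeries.exp ℚ - 1) + hps * (PowerSeries.X * PowerSeries.exp ℚ) = PowerSeries.X := by
    have h2 := congrArg (fun z => PowerSeries.X * z) hd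
    simp only [Dop, mul_one] at h2 ⊢
    linear_combination h2
  calc Dop hps * (PowerSeries.exp ℚ - 1)
      = PowerSeries.X - PowerSeries.X * (hps * (PowerSeries.exp ℚ - 1)) - hps * PowerSeries.X := by
        linear_combination hXd
    _ = (hps - PowerSeries.X * hps - hps ^ 2) * (PowerSeries.exp ℚ - 1) := by
        linear_combination (hps - 1) * key

/-! ### Lemma A -/

noncomputable abbrev cps : Polynomial ℚ →+* PowerSeries ℚ := Polynomial.coeToPowerSeries.ringHom

lemma cps_hyps : (∀ p : Polynomial ℚ, Dop (cps p) = PowerSeries.X * cps (Polynomial.derivative p)) := by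
  intro p
  simp only [Polynomial.coeToPowerSeries.ringHom_apply]
  rw [Dop_coe, Polynomial.coe_mul, Polynomial.coe_X]

lemma lemA (m : ℕ) :
    Dop^[m] fps = ∑ i ∈ Finset.range (m+2), cps (fmi m i) * hps ^ i := by
  induction m with
  | zero =>
    rw [Function.iterate_zero_apply, Finset.sum_range_succ, Finset.sum_range_succ,
      Finset.sum_range_zero, show fmi 0 0 = Polynomial.C (1/2:ℚ) * Polynomial.X - 1 from by rw [fmi],
      show fmi 0 1 = 1 from by rw [fmi]]
    simp only [Polynomial.coeToPowerSeries.ringHom_apply, Polynomial.coe_sub, Polynomial.coe_mul,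
      Polynomial.coe_C, Polynomial.coe_X, Polynomial.coe_one, map_one]
    rw [fps]
    ring
  | succ m ih =>
    rw [Function.iterate_succ_apply', ih]
    exact gstep Dop cps PowerSeries.X hps Dop_add Dop_mul cps_hyps
      (by rw [Polynomial.coeToPowerSeries.ringHom_apply, Polynomial.coe_X]) Dop_hps m

/-! ### Lemma B -/

lemma lemB : ∀ n : ℕ, ∑ i ∈ Finset.range (n+3), fmi (n+1) i * (-Polynomial.X)^i
    = Polynomial.C (-(1:ℚ)/2) * Polynomial.X := by
  have hstep : ∀ m : ℕ,
      Polynomial.X * Polynomial.derivative (∑ i ∈ Finset.range (m+2), fmi m i * (-Polynomial.X)^i)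
        = ∑ i ∈ Finset.range (m+3), fmi (m+1) i * (-Polynomial.X)^i := by
    intro m
    have := gstep (A := Polynomial ℚ) (fun p => Polynomial.X * Polynomial.derivative p)
      (RingHom.id _) Polynomial.X (-Polynomial.X)
      (fun a b => by simp only [derivative_add]; ring)
      (fun a b => by simp only [derivative_mul]; ring)
      (fun p => by simp)
      (by simp)
      (by simp only [derivative_neg, Polynomial.derivative_X]; ring) m
    simpa using this
  intro n
  induction n with
  | zero =>
    rw [← hstep 0, Finset.sum_range_succ, Finset.sum_range_succ, Finset.sum_range_zero,
      show fmi 0 0 = Polynomial.C (1/2:ℚ) * Polynomial.X - 1 from by rw [fmi],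
      show fmi 0 1 = 1 from by rw [fmi]]
    simp
    rw [show (-(1:ℚ)/2) = 1/2 - 1 from by norm_num, map_sub, map_one]
    ring
  | succ n ih =>
    rw [← hstep (n+1), ih]
    simp

/-! ### gmi lemmas -/

lemma gmi_top (m : ℕ) : gmi m (m+1) = Polynomial.C ((-1:ℚ)^m / m.factorial) := by
  rw [gmi]
  simp

lemma gmi_mid (m j : ℕ) (h1 : 1 ≤ j) (h2 : j ≤ m) :
    gmi m j = Polynomial.C ((-1:ℚ)^(m+1) / m.factorial) *
      ∑ i ∈ Finset.Icc j m, fmi m i * gmi (i-1) j := by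
  rw [gmi, if_neg (by omega), dif_pos ⟨h1, h2⟩,
    Finset.sum_attach (Finset.Icc j m) (fun x => fmi m x * gmi (x-1) j)]

/-! ### Main theorem -/

lemma Dop_iter_gps (n : ℕ) : Dop^[n+1] gps = Dop^[n+1] fps := by
  rw [Function.iterate_succ_apply, Function.iterate_succ_apply]
  congr 1
  have hgf : gps = fps + 1 := by rw [gps, fps]; ring
  rw [hgf, Dop_add, Dop_one, add_zero]

lemma aux (m : ℕ) :
    hps^(m+1) = (∑ j ∈ Finset.range (m+1), cps (gmi m (j+1)) * Dop^[j] gps)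
      + PowerSeries.C (R := ℚ) ((1/2) * (-1)^(m+1)) * PowerSeries.X^(m+1) := by
  induction m using Nat.strong_induction_on with
  | _ m IH =>
    match m with
    | 0 =>
      rw [Finset.sum_range_succ, Finset.sum_range_zero, Function.iterate_zero_apply, zero_add,
        gmi_top 0]
      simp only [Polynomial.coeToPowerSeries.ringHom_apply, Polynomial.coe_C]
      rw [gps]
      norm_num
    | Nat.succ k =>
      have IH' : ∀ i, 1 ≤ i → i ≤ (k+1) →
          hps^i = (∑ j ∈ Finset.range i, cps (gmi (i-1) (j+1)) * Dop^[j] gps)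
            + PowerSeries.C (R := ℚ) ((1/2) * (-1)^i) * PowerSeries.X^i := by
        intro i h1 h2
        match i with
        | Nat.succ r => exact IH r (by omega)
      have conv : ∀ (H : ℕ → PowerSeries ℚ),
          (∑ i ∈ Finset.Icc 1 (k+1), H i) = ∑ r ∈ Finset.range (k+1), H (r+1) := by
        intro H
        rw [← Finset.Ico_add_one_right_eq_Icc, Finset.sum_Ico_eq_sum_range]
        simp [Nat.add_comm]
      -- step 1: peel the top term
      rw [Finset.sum_range_succ]
      -- top term
      have htop : cps (gmi (k+1) ((k+1)+1)) * Dop^[(k+1)] gps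
          = PowerSeries.C (R := ℚ) ((-1:ℚ)^(k+1) / (k+1).factorial) *
            (cps (fmi (k+1) 0) + (∑ r ∈ Finset.range (k+1), cps (fmi (k+1) (r+1)) * hps^(r+1))
              + cps (fmi (k+1) ((k+1)+1)) * hps^((k+1)+1)) := by
        rw [gmi_top, Dop_iter_gps k, lemA (k+1)]
        congr 1
        · rw [Polynomial.coeToPowerSeries.ringHom_apply, Polynomial.coe_C]
        · rw [Finset.sum_range_succ (fun i => cps (fmi (k+1) i) * hps ^ i) ((k+1)+1),
            Finset.sum_range_succ' (fun i => cps (fmi (k+1) i) * hps ^ i) (k+1)]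
          ring
      -- main double sum
      have hmain : (∑ j ∈ Finset.range (k+1), cps (gmi (k+1) (j+1)) * Dop^[j] gps)
          = PowerSeries.C (R := ℚ) ((-1:ℚ)^((k+1)+1) / (k+1).factorial) *
            ∑ i ∈ Finset.Icc 1 (k+1), cps (fmi (k+1) i) *
              (hps^i - PowerSeries.C (R := ℚ) ((1/2) * (-1)^i) * PowerSeries.X^i) := by
        have h1 : ∀ j ∈ Finset.range (k+1),
            cps (gmi (k+1) (j+1)) * Dop^[j] gps
              = ∑ i ∈ Finset.Icc (j+1) (k+1), PowerSeries.C (R := ℚ) ((-1:ℚ)^((k+1)+1) / (k+1).factorial) *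
                  (cps (fmi (k+1) i) * (cps (gmi (i-1) (j+1)) * Dop^[j] gps)) := by
          intro j hj
          have hjn := Finset.mem_range.mp hj
          rw [gmi_mid (k+1) (j+1) (by omega) (by omega), map_mul, map_sum]
          rw [show cps (Polynomial.C ((-1:ℚ)^((k+1)+1) / (k+1).factorial))
              = PowerSeries.C (R := ℚ) ((-1:ℚ)^((k+1)+1) / (k+1).factorial) from by
            rw [Polynomial.coeToPowerSeries.ringHom_apply, Polynomial.coe_C]]
          rw [Finset.mul_sum, Finset.sum_mul]
          apply Finset.sum_congr rfl
          intro i hi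
          rw [map_mul]
          ring
        rw [Finset.sum_congr rfl h1]
        rw [Finset.sum_comm' (t' := Finset.Icc 1 (k+1)) (s' := fun i => Finset.range i)
          (by intro i j; simp only [Finset.mem_range, Finset.mem_Icc]; omega)]
        rw [Finset.mul_sum]
        apply Finset.sum_congr rfl
        intro i hi
        have hi1 := (Finset.mem_Icc.mp hi).1
        have hi2 := (Finset.mem_Icc.mp hi).2
        rw [← Finset.mul_sum, ← Finset.mul_sum]
        have := IH' i hi1 hi2
        have hinner : (∑ j ∈ Finset.range i, cps (gmi (i-1) (j+1)) * Dop^[j] gps)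
            = hps^i - PowerSeries.C (R := ℚ) ((1/2) * (-1)^i) * PowerSeries.X^i := by
          linear_combination -this
        rw [hinner]
      -- lemma B consequence
      have hB : (∑ i ∈ Finset.Icc 1 (k+1),
            cps (fmi (k+1) i) * (PowerSeries.C (R := ℚ) ((1/2) * (-1)^i) * PowerSeries.X^i))
          = PowerSeries.C (R := ℚ) (1/2:ℚ) *
            (PowerSeries.C (R := ℚ) ((k+1).factorial : ℚ) * PowerSeries.X^((k+1)+1) - PowerSeries.X) := by
        have hpoly : (∑ r ∈ Finset.range (k+1), fmi (k+1) (r+1) * (-Polynomial.X)^(r+1))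
            = Polynomial.C ((k+1).factorial : ℚ) * Polynomial.X^((k+1)+1) - Polynomial.X := by
          have hsplit := lemB k
          rw [Finset.sum_range_succ (fun i => fmi (k+1) i * (-Polynomial.X) ^ i) ((k+1)+1),
            Finset.sum_range_succ' (fun i => fmi (k+1) i * (-Polynomial.X) ^ i) (k+1)] at hsplit
          rw [fmi_zero_val k, fmi_top (k+1)] at hsplit
          have hneg : (-Polynomial.X : Polynomial ℚ)^((k+1)+1) = Polynomial.C ((-1:ℚ)^((k+1)+1)) * Polynomial.X^((k+1)+1) := by
            rw [neg_pow]
            simp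
          rw [hneg] at hsplit
          have hfac : Polynomial.C ((-1:ℚ)^(k+1) * (k+1).factorial) * (Polynomial.C ((-1:ℚ)^((k+1)+1)) * Polynomial.X^((k+1)+1))
              = - (Polynomial.C ((k+1).factorial : ℚ) * Polynomial.X^((k+1)+1)) := by
            rw [← mul_assoc, ← Polynomial.C_mul]
            have h1 : (-1:ℚ)^(k+1) * (-1:ℚ)^((k+1)+1) = -1 := by
              rw [← pow_add, show (k+1) + ((k+1)+1) = 2*(k+1)+1 from by omega, pow_succ, pow_mul]
              norm_num
            have : (-1:ℚ)^(k+1) * (k+1).factorial * (-1:ℚ)^((k+1)+1) = -((k+1).factorial : ℚ) := by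
              linear_combination ((k+1).factorial : ℚ) * h1
            rw [this]
            simp
          rw [hfac] at hsplit
          have hC : Polynomial.C (-1/2:ℚ) = Polynomial.C (1/2:ℚ) - 1 := by
            rw [show (-1/2:ℚ) = 1/2 - 1 from by norm_num, map_sub, map_one]
          linear_combination hsplit + Polynomial.X * hC
        rw [conv (fun i => cps (fmi (k+1) i) * (PowerSeries.C (R := ℚ) ((1/2) * (-1)^i) * PowerSeries.X^i))]
        have hterm : ∀ r ∈ Finset.range (k+1),
            cps (fmi (k+1) (r+1)) * (PowerSeries.C (R := ℚ) ((1/2) * (-1)^(r+1)) * PowerSeries.X^(r+1))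
              = PowerSeries.C (R := ℚ) (1/2:ℚ) * cps (fmi (k+1) (r+1) * (-Polynomial.X)^(r+1)) := by
          intro r hr
          have e1 : cps ((-Polynomial.X)^(r+1)) = (-PowerSeries.X)^(r+1) := by
            rw [map_pow, map_neg, Polynomial.coeToPowerSeries.ringHom_apply, Polynomial.coe_X]
          have e2 : PowerSeries.C (R := ℚ) ((1/2) * (-1)^(r+1))
              = PowerSeries.C (R := ℚ) (1/2:ℚ) * ((-1:PowerSeries ℚ))^(r+1) := by
            rw [map_mul, map_pow, map_neg, map_one]
          rw [map_mul cps (fmi (k+1) (r+1)) ((-Polynomial.X)^(r+1)), e1, e2]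
          ring
        rw [Finset.sum_congr rfl hterm, ← Finset.mul_sum, ← map_sum, hpoly]
        rw [map_sub, map_mul, map_pow,
          show cps Polynomial.X = PowerSeries.X from by
            rw [Polynomial.coeToPowerSeries.ringHom_apply, Polynomial.coe_X],
          show cps (Polynomial.C ((k+1).factorial:ℚ)) = PowerSeries.C (R := ℚ) ((k+1).factorial:ℚ) from by
            rw [Polynomial.coeToPowerSeries.ringHom_apply, Polynomial.coe_C]]
      -- assemble
      rw [hmain, htop]
      rw [show (∑ i ∈ Finset.Icc 1 (k+1), cps (fmi (k+1) i) *
            (hps^i - PowerSeries.C (R := ℚ) ((1/2) * (-1)^i) * PowerSeries.X^i))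
          = (∑ r ∈ Finset.range (k+1), cps (fmi (k+1) (r+1)) * hps^(r+1))
            - PowerSeries.C (R := ℚ) (1/2:ℚ) *
              (PowerSeries.C (R := ℚ) ((k+1).factorial : ℚ) * PowerSeries.X^((k+1)+1) - PowerSeries.X) from by
        rw [conv (fun i => cps (fmi (k+1) i) *
              (hps^i - PowerSeries.C (R := ℚ) ((1/2) * (-1)^i) * PowerSeries.X^i)), ← hB,
          conv (fun i => cps (fmi (k+1) i) * (PowerSeries.C (R := ℚ) ((1/2) * (-1)^i) * PowerSeries.X^i)),
          ← Finset.sum_sub_distrib]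
        apply Finset.sum_congr rfl
        intro r hr
        ring]
      rw [fmi_zero_val k, fmi_top (k+1)]
      rw [show cps (Polynomial.C (1/2:ℚ) * Polynomial.X)
          = PowerSeries.C (R := ℚ) (1/2:ℚ) * PowerSeries.X from by
        rw [Polynomial.coeToPowerSeries.ringHom_apply, Polynomial.coe_mul, Polynomial.coe_C,
          Polynomial.coe_X],
        show cps (Polynomial.C ((-1:ℚ)^(k+1) * (k+1).factorial))
          = PowerSeries.C (R := ℚ) ((-1:ℚ)^(k+1) * (k+1).factorial) from by
        rw [Polynomial.coeToPowerSeries.ringHom_apply, Polynomial.coe_C]]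
      have hfne : ((k+1).factorial : ℚ) ≠ 0 := Nat.cast_ne_zero.mpr (k+1).factorial_ne_zero
      have hab : PowerSeries.C (R := ℚ) ((-1:ℚ)^(k+1) / (k+1).factorial) * PowerSeries.C (R := ℚ) ((-1:ℚ)^(k+1) * (k+1).factorial)
          = 1 := by
        rw [← map_mul, ← map_one (PowerSeries.C (R := ℚ))]
        congr 1
        rw [show ((-1:ℚ)^(k+1) / (k+1).factorial) * ((-1:ℚ)^(k+1) * (k+1).factorial)
            = ((-1:ℚ)^(k+1) * (-1:ℚ)^(k+1)) * (((k+1).factorial:ℚ) / (k+1).factorial) from by ring,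
          div_self hfne, mul_one, ← pow_add, ← two_mul, pow_mul]
        norm_num
      have hen : PowerSeries.C (R := ℚ) ((-1:ℚ)^((k+1)+1) / (k+1).factorial)
          = - PowerSeries.C (R := ℚ) ((-1:ℚ)^(k+1) / (k+1).factorial) := by
        rw [← map_neg]
        congr 1
        rw [pow_succ]
        field_simp
      have h2 : PowerSeries.C (R := ℚ) ((-1:ℚ)^(k+1) / (k+1).factorial) * PowerSeries.C (R := ℚ) (1/2:ℚ)
            * PowerSeries.C (R := ℚ) ((k+1).factorial : ℚ)
          + PowerSeries.C (R := ℚ) ((1/2) * (-1:ℚ)^((k+1)+1)) = 0 := by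
        rw [← map_mul, ← map_mul, ← map_add, ← map_zero (PowerSeries.C (R := ℚ))]
        congr 1
        have hs : ((-1:ℚ)^(k+1) / (k+1).factorial) * (1/2) * ((k+1).factorial:ℚ) = (1/2) * (-1:ℚ)^(k+1) := by
          field_simp
        rw [hs, pow_succ]
        ring
      rw [hen]
      simp only [Nat.succ_eq_add_one]
      linear_combination (-(hps^(k+2))) * hab - PowerSeries.X^(k+2) * h2

theorem h_pow_eq (i : ℕ) (hi : 1 ≤ i) :
    hps ^ i = (∑ j ∈ Finset.Icc 1 i, (gmi (i - 1) j : PowerSeries ℚ) * Dop^[j - 1] gps)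
      + PowerSeries.C (R := ℚ) ((1/2) * (-1) ^ i) * PowerSeries.X ^ i := by
  match i with
  | Nat.succ m =>
    have := aux m
    rw [this]
    congr 1
    rw [← Finset.Ico_add_one_right_eq_Icc, Finset.sum_Ico_eq_sum_range]
    simp only [Nat.add_sub_cancel, Nat.succ_sub_one]
    apply Finset.sum_congr rfl
    intro r hr
    rw [show 1 + r = r + 1 from by omega]
    simp only [Nat.add_sub_cancel, Polynomial.coeToPowerSeries.ringHom_apply]
end

section
/- Fix an integer n ≥ 1 and nonnegative integers m_1, …, m_n, and set M = m_1 + ⋯ + m_n. Then f_0(t) = ∏_{j=1}^{n} (t/2 − δ_{m_j,0}), and for every integer i with 0 ≤ i ≤ M + n the polynomial f_i(t) has degree at most M + n − i. -/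
open Polynomial PowerSeries

/-- `f_i(t) = ∑ ∏_j f_{m_j, i_j}(t)` over tuples with `∑ i_j = i`, `0 ≤ i_j ≤ m_j + 1`. -/
noncomputable def bigf (n : ℕ) (m : Fin n → ℕ) (i : ℕ) : Polynomial ℚ :=
  ∑ v ∈ (Fintype.piFinset fun j => Finset.range (m j + 2)).filter
      (fun v => ∑ j, v j = i),
    ∏ j, fmi (m j) (v j)

/-- The polynomials `F_j(t)`. -/
noncomputable def bigF (n : ℕ) (m : Fin n → ℕ) (j : ℕ) : Polynomial ℚ :=
  if j = 0 then
    bigf n m 0 + Polynomial.C (1/2 : ℚ) *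
      ∑ i ∈ Finset.Icc 1 ((∑ j, m j) + n),
        ((-1 : ℚ) ^ i) • (bigf n m i * Polynomial.X ^ i)
  else
    ∑ i ∈ Finset.Icc j ((∑ j, m j) + n), bigf n m i * gmi (i - 1) j

/-- `a_{j,l}` is the coefficient of `t^{2l}` in `F_j(t)`. -/
noncomputable def acoef (n : ℕ) (m : Fin n → ℕ) (j l : ℕ) : ℚ :=
  (bigF n m j).coeff (2 * l)

/-- The set of compositions of `k` into `n` positive parts. -/
noncomputable def comps (n k : ℕ) : Finset (Fin n → ℕ) :=
  (Fintype.piFinset fun _ => Finset.Icc 1 k).filter (fun v => ∑ j, v j = k)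

lemma fmi_zero (m : ℕ) :
    fmi m 0 = Polynomial.C (1/2 : ℚ) * Polynomial.X - if m = 0 then 1 else 0 := by
  induction m with
  | zero => simp [fmi]
  | succ k ih =>
    have h0 : fmi (k+1) 0 = Polynomial.X * Polynomial.derivative (fmi k 0) := by
      simp [fmi]
    have hd : Polynomial.derivative (fmi k 0) = Polynomial.C (1/2 : ℚ) := by
      rw [ih]
      rcases Nat.eq_zero_or_pos k with hk | hk
      · subst hk; simp
      · have : k ≠ 0 := hk.ne'
        simp [this]
    rw [h0, hd, if_neg (Nat.succ_ne_zero k), sub_zero, mul_comm]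

lemma fmi_deg (m : ℕ) : ∀ i, i ≤ m + 1 →
    (fmi m i).degree ≤ ((m + 1 - i : ℕ) : WithBot ℕ) := by
  induction m with
  | zero =>
    intro i hi
    interval_cases i
    · have h00 : fmi 0 0 = Polynomial.C (1/2 : ℚ) * Polynomial.X - 1 := by simp [fmi]
      rw [h00]
      refine le_trans (Polynomial.degree_sub_le _ _) (max_le ?_ ?_)
      · refine le_trans (Polynomial.degree_mul_le _ _) ?_
        refine le_trans (add_le_add Polynomial.degree_C_le Polynomial.degree_X_le) ?_
        simp
      · exact le_trans Polynomial.degree_one_le (by exact_mod_cast Nat.zero_le 1)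
    · have h01 : fmi 0 1 = 1 := by simp [fmi]
      rw [h01]
      simpa using Polynomial.degree_one_le
  | succ k ih =>
    intro i hi
    match i with
    | 0 =>
      have h0 : fmi (k+1) 0 = Polynomial.X * Polynomial.derivative (fmi k 0) := by
        simp [fmi]
      rw [h0]
      refine le_trans (Polynomial.degree_mul_le _ _) ?_
      have h1 : (Polynomial.derivative (fmi k 0)).degree ≤ ((k + 1 : ℕ) : WithBot ℕ) :=
        le_trans Polynomial.degree_derivative_le (ih 0 (by omega))
      refine le_trans (add_le_add Polynomial.degree_X_le h1) ?_
      rw [show ((1 : WithBot ℕ)) = ((1 : ℕ) : WithBot ℕ) from rfl, ← Nat.cast_add]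
      exact Nat.cast_le.mpr (by omega)
    | i + 1 =>
      by_cases h1 : i = k + 1
      · have he : fmi (k+1) (i+1) = -((k : ℚ) + 1) • fmi k (k + 1) := by
          simp [fmi, h1]
        rw [he]
        refine le_trans (Polynomial.degree_smul_le _ _) ?_
        refine le_trans (ih (k+1) le_rfl) (Nat.cast_le.mpr (by omega))
      · have h2 : i + 1 ≤ k + 1 := by omega
        have he : fmi (k+1) (i+1) =
            Polynomial.X * Polynomial.derivative (fmi k (i + 1))
              + Polynomial.C ((i : ℚ) + 1) * (1 - Polynomial.X) * fmi k (i + 1)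
              - Polynomial.C (i : ℚ) * fmi k i := by
          simp [fmi, h1, h2]
        rw [he]
        have hA : (fmi k (i+1)).degree ≤ ((k - i : ℕ) : WithBot ℕ) := by
          refine le_trans (ih (i+1) h2) (Nat.cast_le.mpr (by omega))
        have hB : (fmi k i).degree ≤ ((k + 1 - i : ℕ) : WithBot ℕ) := ih i (by omega)
        refine le_trans (Polynomial.degree_sub_le _ _) (max_le (le_trans
          (Polynomial.degree_add_le _ _) (max_le ?_ ?_)) ?_)
        · refine le_trans (Polynomial.degree_mul_le _ _) ?_
          have hd : (Polynomial.derivative (fmi k (i+1))).degree ≤ ((k - i : ℕ) : WithBot ℕ) :=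
            le_trans Polynomial.degree_derivative_le hA
          refine le_trans (add_le_add Polynomial.degree_X_le hd) ?_
          rw [show ((1 : WithBot ℕ)) = ((1 : ℕ) : WithBot ℕ) from rfl, ← Nat.cast_add]
          exact Nat.cast_le.mpr (by omega)
        · refine le_trans (Polynomial.degree_mul_le _ _) ?_
          have hcx : (Polynomial.C ((i : ℚ) + 1) * (1 - Polynomial.X)).degree
              ≤ ((1 : ℕ) : WithBot ℕ) := by
            refine le_trans (Polynomial.degree_mul_le _ _) ?_
            have h1x : (1 - Polynomial.X : Polynomial ℚ).degree ≤ ((1 : ℕ) : WithBot ℕ) :=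
              le_trans (Polynomial.degree_sub_le _ _) (max_le
                (le_trans Polynomial.degree_one_le (by exact_mod_cast Nat.zero_le 1))
                Polynomial.degree_X_le)
            refine le_trans (add_le_add Polynomial.degree_C_le h1x) ?_
            simp
          refine le_trans (add_le_add hcx hA) ?_
          rw [← Nat.cast_add]
          exact Nat.cast_le.mpr (by omega)
        · refine le_trans (Polynomial.degree_mul_le _ _) ?_
          refine le_trans (add_le_add Polynomial.degree_C_le hB) ?_
          rw [show ((0 : WithBot ℕ)) = ((0 : ℕ) : WithBot ℕ) from rfl, ← Nat.cast_add]
          exact Nat.cast_le.mpr (by omega)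

theorem bigf_zero_and_degree (n : ℕ) (hn : 1 ≤ n) (m : Fin n → ℕ) :
    bigf n m 0 = ∏ j, (Polynomial.C (1/2 : ℚ) * Polynomial.X
        - if m j = 0 then 1 else 0) ∧
    ∀ i ≤ (∑ j, m j) + n, (bigf n m i).degree ≤ ((∑ j, m j) + n - i : ℕ) := by
  constructor
  · have hset : (Fintype.piFinset fun j => Finset.range (m j + 2)).filter
        (fun v => ∑ j, v j = 0) = {fun _ => 0} := by
      ext v
      simp only [Finset.mem_filter, Fintype.mem_piFinset, Finset.mem_range,
        Finset.mem_singleton]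
      constructor
      · rintro ⟨-, hsum⟩
        funext j
        have := (Finset.sum_eq_zero_iff.mp hsum) j (Finset.mem_univ j)
        exact this
      · rintro rfl
        exact ⟨fun j => by simp, by simp⟩
    rw [bigf, hset, Finset.sum_singleton]
    exact Finset.prod_congr rfl fun j _ => fmi_zero (m j)
  · intro i hi
    rw [bigf]
    refine le_trans (Polynomial.degree_sum_le _ _) (Finset.sup_le ?_)
    intro v hv
    simp only [Finset.mem_filter, Fintype.mem_piFinset, Finset.mem_range] at hv
    obtain ⟨hv1, hv2⟩ := hv
    refine le_trans (Polynomial.degree_prod_le _ _) ?_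
    calc ∑ j, (fmi (m j) (v j)).degree
        ≤ ∑ j, ((m j + 1 - v j : ℕ) : WithBot ℕ) :=
          Finset.sum_le_sum (fun j _ => fmi_deg (m j) (v j) (by have := hv1 j; omega))
      _ = ((∑ j, (m j + 1 - v j) : ℕ) : WithBot ℕ) := (Nat.cast_sum _ _).symm
      _ ≤ _ := by
          have h2 : ∑ j, (m j + 1 - v j + v j) = ∑ j, (m j + 1) :=
            Finset.sum_congr rfl fun j _ =>
              Nat.sub_add_cancel (by have := hv1 j; omega)
          rw [Finset.sum_add_distrib, hv2] at h2
          have h3 : ∑ j : Fin n, (m j + 1) = (∑ j, m j) + n := by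
            rw [Finset.sum_add_distrib]; simp
          rw [Nat.cast_le]
          omega
end
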